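/- arXiv:1009.2874 — 3 statements merged into one kernel-verified Lean document; each statement's English description precedes it below -/
import Mathlib

section
/- There exists a constant C > 0, depending only on N and p, such that for every admissible function u ∈ M one has sup_{r ∈ [0,1]} u(r) = u(1) ≤ C ‖u‖. -/
open MeasureTheory Real Set

noncomputable section

/-- A function `u : [0,1] → ℝ` is admissible (belongs to the cone `M`) with density `u'`:
nonnegative, monotone non-decreasing, absolutely continuous with measurable derivative `u'`,
and with finite weighted `W^{1,p}` energy `∫_0^1 (|u'|^p + u^p) r^{N-1} dr < ∞`. -/
def Admissible (N : ℕ) (p : ℝ) (u u' : ℝ → ℝ) : Prop :=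
  (∀ r ∈ Icc (0:ℝ) 1, 0 ≤ u r) ∧
  MonotoneOn u (Icc (0:ℝ) 1) ∧
  Measurable u' ∧
  (∀ r ∈ Icc (0:ℝ) 1, u r = u 0 + ∫ s in (0:ℝ)..r, u' s) ∧
  IntegrableOn (fun r => (|u' r| ^ p + u r ^ p) * r ^ (N - 1)) (Ioo (0:ℝ) 1)

/-- The radial `W^{1,p}` norm `‖u‖ = (∫_0^1 (|u'|^p + u^p) r^{N-1} dr)^{1/p}`. -/
def Mnorm (N : ℕ) (p : ℝ) (u u' : ℝ → ℝ) : ℝ :=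
  (∫ r in Ioo (0:ℝ) 1, (|u' r| ^ p + u r ^ p) * r ^ (N - 1)) ^ (1 / p)

/-- Assumption (A) on the weight `a`: measurable, monotone non-decreasing, not a.e. constant,
a.e. positive, and integrable on `(0,1)`. -/
def CondA (a : ℝ → ℝ) : Prop :=
  Measurable a ∧ MonotoneOn a (Ioo (0:ℝ) 1) ∧
  (¬ ∃ c : ℝ, ∀ᵐ r ∂(volume.restrict (Ioo (0:ℝ) 1)), a r = c) ∧
  (∀ᵐ r ∂(volume.restrict (Ioo (0:ℝ) 1)), 0 < a r) ∧
  IntegrableOn a (Ioo (0:ℝ) 1)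

/-- The primitive `F(t) = ∫_0^t f(s) ds`. -/
def Fint (f : ℝ → ℝ) (t : ℝ) : ℝ := ∫ s in (0:ℝ)..t, f s

/-- Assumption (F) on the nonlinearity `f`: `C¹` on `[0,∞)`, `f(0) = 0`, `f > 0` on `(0,∞)`,
and `t ↦ f(t)/t^{p-1}` strictly increasing on `(0,∞)`. -/
def CondF (p : ℝ) (f : ℝ → ℝ) : Prop :=
  ContDiffOn ℝ 1 f (Ici (0:ℝ)) ∧ f 0 = 0 ∧ (∀ t > (0:ℝ), 0 < f t) ∧
  StrictMonoOn (fun t => f t / t ^ (p - 1)) (Ioi (0:ℝ))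

/-- `v` is a `C¹` function on `[0,1]` with derivative `v'`. -/
def IsC1On01 (v v' : ℝ → ℝ) : Prop :=
  (∀ r ∈ Icc (0:ℝ) 1, HasDerivAt v (v' r) r) ∧ ContinuousOn v' (Icc (0:ℝ) 1)

/-- `u` is a radial weak solution of `-Δ_p u + u^{p-1} = λ a f(u)` with Neumann boundary
conditions on the unit ball, tested against all `C¹` functions `v` on `[0,1]`. -/
def WeakSolution (N : ℕ) (p lam : ℝ) (a f : ℝ → ℝ) (u u' : ℝ → ℝ) : Prop :=
  ∀ v v' : ℝ → ℝ, IsC1On01 v v' →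
    ∫ r in Ioo (0:ℝ) 1,
        (|u' r| ^ (p - 2) * u' r * v' r + u r ^ (p - 1) * v r) * r ^ (N - 1)
      = lam * ∫ r in Ioo (0:ℝ) 1, a r * f (u r) * v r * r ^ (N - 1)

/-- The set of values `∫_0^1 a F(u) r^{N-1} dr` over admissible `u` with `‖u‖ = 1`;
its supremum is the quantity `S`. -/
def Svals (N : ℕ) (p : ℝ) (a f : ℝ → ℝ) : Set ℝ :=
  { y | ∃ u u' : ℝ → ℝ, Admissible N p u u' ∧ Mnorm N p u u' = 1 ∧
      y = ∫ r in Ioo (0:ℝ) 1, a r * Fint f (u r) * r ^ (N - 1) }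

/-- `u` is a maximizer for `S`: admissible, with unit norm, achieving the supremum. -/
def IsMaximizer (N : ℕ) (p : ℝ) (a f : ℝ → ℝ) (u u' : ℝ → ℝ) : Prop :=
  Admissible N p u u' ∧ Mnorm N p u u' = 1 ∧
  (∫ r in Ioo (0:ℝ) 1, a r * Fint f (u r) * r ^ (N - 1)) = sSup (Svals N p a f)

/-- Assumption (F') on `f` (with derivative `f'`): `C¹` on `[0,∞)`, `f(t) = o(t^{p-1})`
as `t → 0⁺`, `f'(t)t - (p-1)f(t) > 0` for `t > 0`, and the Ambrosetti–Rabinowitz condition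
`f(t)t ≥ γ F(t)` for some `γ > p`. -/
def CondF' (p : ℝ) (f f' : ℝ → ℝ) : Prop :=
  (∀ t ∈ Ici (0:ℝ), HasDerivWithinAt f (f' t) (Ici (0:ℝ)) t) ∧
  ContinuousOn f' (Ici (0:ℝ)) ∧
  Filter.Tendsto (fun t => f t / t ^ (p - 1)) (nhdsWithin 0 (Ioi (0:ℝ))) (nhds 0) ∧
  (∀ t > (0:ℝ), 0 < f' t * t - (p - 1) * f t) ∧
  (∃ γ > p, ∀ t > (0:ℝ), f t * t ≥ γ * Fint f t)

/-- Assumption (F''): `t ↦ f(t)/t^{p-1}` is strictly increasing on `(0,∞)`. -/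
def CondF'' (p : ℝ) (f : ℝ → ℝ) : Prop :=
  StrictMonoOn (fun t => f t / t ^ (p - 1)) (Ioi (0:ℝ))

/-- The Nehari set `𝒩`. -/
def Nehari (N : ℕ) (p : ℝ) (a f : ℝ → ℝ) (u u' : ℝ → ℝ) : Prop :=
  Admissible N p u u' ∧ (¬ ∀ r ∈ Icc (0:ℝ) 1, u r = 0) ∧
  (Mnorm N p u u') ^ p = ∫ r in Ioo (0:ℝ) 1, a r * f (u r) * u r * r ^ (N - 1)

/-- The functional `J(u) = (1/p)‖u‖^p - ∫_0^1 a F(u) r^{N-1} dr`. -/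
def Jfun (N : ℕ) (p : ℝ) (a f : ℝ → ℝ) (u u' : ℝ → ℝ) : ℝ :=
  (1 / p) * (Mnorm N p u u') ^ p -
    ∫ r in Ioo (0:ℝ) 1, a r * Fint f (u r) * r ^ (N - 1)

/-- The set of values of `J` on the Nehari set; its infimum is `c₀`. -/
def Jvals (N : ℕ) (p : ℝ) (a f : ℝ → ℝ) : Set ℝ :=
  { y | ∃ u u' : ℝ → ℝ, Nehari N p a f u u' ∧ y = Jfun N p a f u u' }


/-- uniform `L^∞` bound on the cone `M`: there is `C > 0`, depending only
on `N` and `p`, with `sup_{[0,1]} u = u(1) ≤ C ‖u‖` for every admissible `u`. -/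
theorem statement2 (N : ℕ) (hN : 3 ≤ N) (p : ℝ) (hp1 : 1 < p) :
    ∃ C > (0:ℝ), ∀ u u' : ℝ → ℝ, Admissible N p u u' →
      (∀ r ∈ Icc (0:ℝ) 1, u r ≤ u 1) ∧ u 1 ≤ C * Mnorm N p u u' := by
  classical
  have hp0 : (0:ℝ) < p := lt_trans one_pos hp1
  set q : ℝ := p / (p - 1) with hqdef
  have hpq : p.HolderConjugate q := Real.HolderConjugate.conjExponent hp1
  refine ⟨2 ^ (N + 1), by positivity, ?_⟩
  rintro u u' ⟨h1, h2, h3, h4, h5⟩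
  have h11 : (1:ℝ) ∈ Icc (0:ℝ) 1 := ⟨zero_le_one, le_refl 1⟩
  have hhalf : (1/2:ℝ) ∈ Icc (0:ℝ) 1 := by norm_num
  refine ⟨fun r hr => h2 hr h11 hr.2, ?_⟩
  set I : ℝ := ∫ r in Ioo (0:ℝ) 1, (|u' r| ^ p + u r ^ p) * r ^ (N - 1) with hIdef
  have hMnorm : Mnorm N p u u' = I ^ (1/p) := by rw [hIdef]; rfl
  have hand_nonneg : ∀ r ∈ Ioo (0:ℝ) 1, 0 ≤ (|u' r| ^ p + u r ^ p) * r ^ (N - 1) := by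
    intro r hr
    have hu0 : 0 ≤ u r := h1 r ⟨hr.1.le, hr.2.le⟩
    exact mul_nonneg (add_nonneg (Real.rpow_nonneg (abs_nonneg _) _)
      (Real.rpow_nonneg hu0 _)) (pow_nonneg hr.1.le _)
  have hI0 : 0 ≤ I :=
    setIntegral_nonneg measurableSet_Ioo hand_nonneg
  have hI0p : 0 ≤ I ^ (1/p) := Real.rpow_nonneg hI0 _
  have hsub : Ioo (1/2:ℝ) 1 ⊆ Ioo (0:ℝ) 1 := Ioo_subset_Ioo (by norm_num) le_rfl
  have hIsub : (∫ r in Ioo (1/2:ℝ) 1, (|u' r| ^ p + u r ^ p) * r ^ (N - 1)) ≤ I := by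
    rw [hIdef]
    refine setIntegral_mono_set h5 ?_ (HasSubset.Subset.eventuallyLE hsub)
    exact (ae_restrict_iff' measurableSet_Ioo).2 (Filter.Eventually.of_forall hand_nonneg)
  -- pointwise bound for the derivative term on (1/2, 1)
  have hbd : ∀ r ∈ Ioo (1/2:ℝ) 1,
      |u' r| ^ p ≤ 2 ^ (N-1) * ((|u' r| ^ p + u r ^ p) * r ^ (N-1)) := by
    intro r hr
    have hu0 : 0 ≤ u r := h1 r ⟨by linarith [hr.1], hr.2.le⟩
    have h1r : (1:ℝ) ≤ 2 ^ (N-1) * r ^ (N-1) := by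
      rw [← mul_pow]
      exact one_le_pow₀ (by linarith [hr.1])
    have ha : 0 ≤ |u' r| ^ p + u r ^ p :=
      add_nonneg (Real.rpow_nonneg (abs_nonneg _) _) (Real.rpow_nonneg hu0 _)
    calc |u' r| ^ p ≤ |u' r| ^ p + u r ^ p := le_add_of_nonneg_right (Real.rpow_nonneg hu0 _)
      _ = (|u' r| ^ p + u r ^ p) * 1 := (mul_one _).symm
      _ ≤ (|u' r| ^ p + u r ^ p) * (2 ^ (N-1) * r ^ (N-1)) :=
          mul_le_mul_of_nonneg_left h1r ha
      _ = 2 ^ (N-1) * ((|u' r| ^ p + u r ^ p) * r ^ (N-1)) := by ring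
  have hmeas : Measurable fun r : ℝ => |u' r| ^ p :=
    (Real.continuous_rpow_const hp0.le).measurable.comp h3.abs
  have hIp : IntegrableOn (fun r => |u' r| ^ p) (Ioo (1/2:ℝ) 1) := by
    refine Integrable.mono' ((h5.mono_set hsub).const_mul (2 ^ (N-1)))
      hmeas.aestronglyMeasurable ?_
    filter_upwards [ae_restrict_mem measurableSet_Ioo] with r hr
    rw [Real.norm_eq_abs, abs_of_nonneg (Real.rpow_nonneg (abs_nonneg _) _)]
    exact hbd r hr
  have hInt1 : IntegrableOn (fun r => |u' r|) (Ioo (1/2:ℝ) 1) := by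
    refine Integrable.mono' (hIp.add (integrable_const 1))
      h3.abs.aestronglyMeasurable (Filter.Eventually.of_forall fun r => ?_)
    rw [Real.norm_eq_abs, abs_abs]
    rcases le_total (|u' r|) 1 with h | h
    · have h0 := Real.rpow_nonneg (abs_nonneg (u' r)) p
      simp only [Pi.add_apply]
      linarith
    · have h2' : |u' r| ^ (1:ℝ) ≤ |u' r| ^ p :=
        Real.rpow_le_rpow_of_exponent_le h hp1.le
      rw [Real.rpow_one] at h2'
      simp only [Pi.add_apply]
      linarith
  have hu'int : IntegrableOn u' (Ioo (1/2:ℝ) 1) := by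
    refine (integrable_norm_iff
      (h3.aestronglyMeasurable.restrict (s := Ioo (1/2:ℝ) 1))).1 ?_
    simpa [Real.norm_eq_abs, IntegrableOn] using hInt1
  have habs_nonneg : 0 ≤ ∫ r in Ioo (1/2:ℝ) 1, |u' r| :=
    setIntegral_nonneg measurableSet_Ioo fun r _ => abs_nonneg _
  -- Step D : u 1 ≤ u (1/2) + ∫ |u'|
  have hD : u 1 ≤ u (1/2) + ∫ r in Ioo (1/2:ℝ) 1, |u' r| := by
    by_cases hii : IntervalIntegrable u' volume 0 (1/2)
    · have hii2 : IntervalIntegrable u' volume (1/2) 1 := by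
        rw [intervalIntegrable_iff_integrableOn_Ioo_of_le (by norm_num)]
        exact hu'int
      have hadd := intervalIntegral.integral_add_adjacent_intervals hii hii2
      have e1 := h4 1 h11
      have e2 := h4 (1/2) hhalf
      have heq : u 1 = u (1/2) + ∫ s in (1/2:ℝ)..1, u' s := by
        rw [e1, e2, ← hadd]; ring
      have habs : (∫ s in (1/2:ℝ)..1, u' s) ≤ ∫ s in (1/2:ℝ)..1, |u' s| := by
        calc (∫ s in (1/2:ℝ)..1, u' s) ≤ |∫ s in (1/2:ℝ)..1, u' s| := le_abs_self _
          _ ≤ ∫ s in (1/2:ℝ)..1, |u' s| :=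
            intervalIntegral.abs_integral_le_integral_abs (by norm_num)
      have heq2 : (∫ s in (1/2:ℝ)..1, |u' s|) = ∫ r in Ioo (1/2:ℝ) 1, |u' r| := by
        rw [intervalIntegral.integral_of_le (by norm_num : (1/2:ℝ) ≤ 1),
          MeasureTheory.integral_Ioc_eq_integral_Ioo]
      rw [heq]
      rw [heq2] at habs
      linarith
    · have hii1 : ¬ IntervalIntegrable u' volume 0 1 := by
        intro h
        exact hii (h.mono_set (by
          rw [uIcc_of_le (by norm_num : (0:ℝ) ≤ 1/2), uIcc_of_le (zero_le_one)]
          exact Icc_subset_Icc le_rfl (by norm_num)))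
      have e1 := h4 1 h11
      have e2 := h4 (1/2) hhalf
      rw [intervalIntegral.integral_undef hii1] at e1
      rw [intervalIntegral.integral_undef hii] at e2
      rw [e1, e2]
      linarith
  -- Step A : u (1/2) ≤ 2^N * I^(1/p)
  have hu120 : 0 ≤ u (1/2) := h1 _ hhalf
  have hN1 : N - 1 + 1 = N := by omega
  have hA : u (1/2) ≤ 2 ^ N * I ^ (1/p) := by
    have hconst : ∀ r ∈ Ioo (1/2:ℝ) 1,
        u (1/2) ^ p * (2:ℝ)⁻¹ ^ (N-1) ≤ (|u' r| ^ p + u r ^ p) * r ^ (N - 1) := by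
      intro r hr
      have hr1 : r ∈ Icc (0:ℝ) 1 := ⟨by linarith [hr.1], hr.2.le⟩
      have hur : u (1/2) ≤ u r := h2 hhalf hr1 hr.1.le
      have hu0r : 0 ≤ u r := h1 r hr1
      have hp1' : u (1/2) ^ p ≤ u r ^ p := Real.rpow_le_rpow hu120 hur hp0.le
      have hp2' : (2:ℝ)⁻¹ ^ (N-1) ≤ r ^ (N-1) :=
        pow_le_pow_left₀ (by norm_num) (by rw [inv_eq_one_div]; linarith [hr.1]) _
      have hrn : (0:ℝ) ≤ r ^ (N-1) := pow_nonneg (by linarith [hr.1]) _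
      calc u (1/2) ^ p * (2:ℝ)⁻¹ ^ (N-1) ≤ u r ^ p * r ^ (N-1) :=
            mul_le_mul hp1' hp2' (by positivity) (Real.rpow_nonneg hu0r p)
        _ ≤ (|u' r| ^ p + u r ^ p) * r ^ (N-1) := by
            have h0 := Real.rpow_nonneg (abs_nonneg (u' r)) p
            nlinarith
    have hkey := setIntegral_ge_of_const_le_real measurableSet_Ioo
      (by rw [Real.volume_Ioo]; exact ENNReal.ofReal_ne_top) hconst (h5.mono_set hsub)
    rw [Real.volume_real_Ioo_of_le (by norm_num)] at hkey
    have hval : u (1/2) ^ p * (2:ℝ)⁻¹ ^ N ≤ I := by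
      have hpow : (2:ℝ)⁻¹ ^ N = (2:ℝ)⁻¹ ^ (N-1) * (1 - 1/2) := by
        rw [← hN1, pow_succ]; norm_num
      rw [hpow, ← mul_assoc]
      exact le_trans hkey hIsub
    have hval2 : u (1/2) ^ p ≤ 2 ^ N * I := by
      have h2N : ((2:ℝ)⁻¹ ^ N) * 2 ^ N = 1 := by
        rw [← mul_pow]; norm_num
      calc u (1/2) ^ p = (u (1/2) ^ p * (2:ℝ)⁻¹ ^ N) * 2 ^ N := by
            rw [mul_assoc, h2N, mul_one]
        _ ≤ I * 2 ^ N := mul_le_mul_of_nonneg_right hval (by positivity)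
        _ = 2 ^ N * I := mul_comm _ _
    have hid : (u (1/2) ^ p) ^ (1/p) = u (1/2) := by
      rw [← Real.rpow_mul hu120, mul_one_div, div_self hp0.ne', Real.rpow_one]
    have hfin : (u (1/2) ^ p) ^ (1/p) ≤ (2 ^ N * I) ^ (1/p) :=
      Real.rpow_le_rpow (Real.rpow_nonneg hu120 _) hval2 (by positivity)
    rw [hid, Real.mul_rpow (by positivity) hI0] at hfin
    have h2Np : ((2:ℝ) ^ N) ^ ((1:ℝ)/p) ≤ 2 ^ N := by
      calc ((2:ℝ) ^ N) ^ ((1:ℝ)/p) ≤ ((2:ℝ) ^ N) ^ (1:ℝ) :=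
            Real.rpow_le_rpow_of_exponent_le (one_le_pow₀ one_le_two)
              (by rw [div_le_one hp0]; exact hp1.le)
        _ = 2 ^ N := Real.rpow_one _
    calc u (1/2) ≤ ((2:ℝ) ^ N) ^ ((1:ℝ)/p) * I ^ (1/p) := hfin
      _ ≤ 2 ^ N * I ^ (1/p) := mul_le_mul_of_nonneg_right h2Np hI0p
  -- Step E : Hölder, ∫ |u'| ≤ 2^N * I^(1/p)
  have hE : (∫ r in Ioo (1/2:ℝ) 1, |u' r|) ≤ 2 ^ N * I ^ (1/p) := by
    have hne0 : ENNReal.ofReal p ≠ 0 := by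
      simp only [ne_eq, ENNReal.ofReal_eq_zero, not_le]; exact hp0
    have hMem : MemLp (fun r => |u' r|) (ENNReal.ofReal p)
        (volume.restrict (Ioo (1/2:ℝ) 1)) := by
      refine (memLp_norm_rpow_iff (h3.abs.aestronglyMeasurable.restrict)
        hne0 ENNReal.ofReal_ne_top).1 ?_
      have hdiv : ENNReal.ofReal p / ENNReal.ofReal p = 1 :=
        ENNReal.div_self hne0 ENNReal.ofReal_ne_top
      rw [hdiv, memLp_one_iff_integrable]
      have heqf : (fun x => ‖|u' x|‖ ^ (ENNReal.ofReal p).toReal)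
          = fun x => |u' x| ^ p := by
        funext x
        rw [ENNReal.toReal_ofReal hp0.le, Real.norm_eq_abs, abs_abs]
      rw [heqf]
      exact hIp
    have hMemB : MemLp (fun _ : ℝ => (1:ℝ)) (ENNReal.ofReal q)
        (volume.restrict (Ioo (1/2:ℝ) 1)) := memLp_const 1
    have hHold := integral_mul_le_Lp_mul_Lq_of_nonneg hpq
      (Filter.Eventually.of_forall fun r => abs_nonneg (u' r))
      (Filter.Eventually.of_forall fun _ => zero_le_one) hMem hMemB
    simp only [mul_one, Real.one_rpow] at hHold
    -- second factor ≤ 1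
    have hvol : (∫ _ in Ioo (1/2:ℝ) 1, (1:ℝ)) = 1/2 := by
      rw [setIntegral_const, Real.volume_real_Ioo_of_le (by norm_num), smul_eq_mul]
      norm_num
    have hfac2 : ((∫ _ in Ioo (1/2:ℝ) 1, (1:ℝ)) : ℝ) ^ ((1:ℝ)/q) ≤ 1 := by
      rw [hvol]
      exact Real.rpow_le_one (by norm_num) (by norm_num)
        (div_nonneg zero_le_one hpq.symm.nonneg)
    have hApos : 0 ≤ (∫ r in Ioo (1/2:ℝ) 1, |u' r| ^ p) ^ ((1:ℝ)/p) :=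
      Real.rpow_nonneg (setIntegral_nonneg measurableSet_Ioo
        fun r _ => Real.rpow_nonneg (abs_nonneg _) _) _
    have hHold2 : (∫ r in Ioo (1/2:ℝ) 1, |u' r|) ≤
        (∫ r in Ioo (1/2:ℝ) 1, |u' r| ^ p) ^ ((1:ℝ)/p) := by
      calc (∫ r in Ioo (1/2:ℝ) 1, |u' r|)
          ≤ (∫ r in Ioo (1/2:ℝ) 1, |u' r| ^ p) ^ ((1:ℝ)/p)
            * ((∫ _ in Ioo (1/2:ℝ) 1, (1:ℝ)) : ℝ) ^ ((1:ℝ)/q) := hHold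
        _ ≤ (∫ r in Ioo (1/2:ℝ) 1, |u' r| ^ p) ^ ((1:ℝ)/p) * 1 :=
            mul_le_mul_of_nonneg_left hfac2 hApos
        _ = _ := mul_one _
    -- bound ∫ |u'|^p ≤ 2^(N-1) * I
    have hup : (∫ r in Ioo (1/2:ℝ) 1, |u' r| ^ p) ≤ 2 ^ (N-1) * I := by
      calc (∫ r in Ioo (1/2:ℝ) 1, |u' r| ^ p)
          ≤ ∫ r in Ioo (1/2:ℝ) 1,
              2 ^ (N-1) * ((|u' r| ^ p + u r ^ p) * r ^ (N-1)) :=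
            setIntegral_mono_on hIp ((h5.mono_set hsub).const_mul _)
              measurableSet_Ioo hbd
        _ = 2 ^ (N-1) * ∫ r in Ioo (1/2:ℝ) 1,
              (|u' r| ^ p + u r ^ p) * r ^ (N-1) := integral_const_mul _ _
        _ ≤ 2 ^ (N-1) * I := mul_le_mul_of_nonneg_left hIsub (by positivity)
    have hupn : 0 ≤ ∫ r in Ioo (1/2:ℝ) 1, |u' r| ^ p :=
      setIntegral_nonneg measurableSet_Ioo fun r _ => Real.rpow_nonneg (abs_nonneg _) _
    have hstep : (∫ r in Ioo (1/2:ℝ) 1, |u' r| ^ p) ^ ((1:ℝ)/p)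
        ≤ 2 ^ N * I ^ (1/p) := by
      have h1' : (∫ r in Ioo (1/2:ℝ) 1, |u' r| ^ p) ^ ((1:ℝ)/p)
          ≤ (2 ^ (N-1) * I) ^ ((1:ℝ)/p) :=
        Real.rpow_le_rpow hupn hup (by positivity)
      rw [Real.mul_rpow (by positivity) hI0] at h1'
      have h2' : ((2:ℝ) ^ (N-1)) ^ ((1:ℝ)/p) ≤ 2 ^ N := by
        calc ((2:ℝ) ^ (N-1)) ^ ((1:ℝ)/p) ≤ ((2:ℝ) ^ (N-1)) ^ (1:ℝ) :=
              Real.rpow_le_rpow_of_exponent_le (one_le_pow₀ one_le_two)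
                (by rw [div_le_one hp0]; exact hp1.le)
          _ = 2 ^ (N-1) := Real.rpow_one _
          _ ≤ 2 ^ N := pow_le_pow_right₀ one_le_two (by omega)
      calc (∫ r in Ioo (1/2:ℝ) 1, |u' r| ^ p) ^ ((1:ℝ)/p)
          ≤ ((2:ℝ) ^ (N-1)) ^ ((1:ℝ)/p) * I ^ ((1:ℝ)/p) := h1'
        _ ≤ 2 ^ N * I ^ (1/p) := mul_le_mul_of_nonneg_right h2' hI0p
    exact le_trans hHold2 hstep
  rw [hMnorm]
  have hpow2 : (2:ℝ) ^ (N + 1) = 2 ^ N + 2 ^ N := by ring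
  calc u 1 ≤ u (1/2) + ∫ r in Ioo (1/2:ℝ) 1, |u' r| := hD
    _ ≤ 2 ^ N * I ^ (1/p) + 2 ^ N * I ^ (1/p) := add_le_add hA hE
    _ = 2 ^ (N + 1) * I ^ (1/p) := by rw [hpow2]; ring

end
end

section
/- For every real p with 1 < p < 2 there exists a constant c_p > 0, depending only on p, such that for every positive integer n and all vectors x, y ∈ ℝ^n with (x, y) ≠ (0, 0) one has ⟨|x|^{p-2} x − |y|^{p-2} y, x − y⟩ ≥ c_p |x − y|² / (|x| + |y|)^{2-p}, where |·| is the Euclidean norm, ⟨·,·⟩ the Euclidean inner product, and |x|^{p-2}x is interpreted as 0 when x = 0. -/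
open Real
open scoped RealInnerProductSpace

-- scalar lemma
lemma scalar_ineq10 (p a b t : ℝ) (hp1 : 1 < p) (hp2 : p < 2) (hb : 0 ≤ b)
    (hba : b ≤ a) (ha : 0 < a) (ht : |t| ≤ a * b) :
    (p - 1) / 2 * (a ^ 2 + b ^ 2 - 2 * t) / (a + b) ^ (2 - p)
      ≤ a ^ (p - 2) * a ^ 2 + b ^ (p - 2) * b ^ 2 - (a ^ (p - 2) + b ^ (p - 2)) * t := by
  have hab : 0 < a + b := by linarith
  have hD : 0 < (a + b) ^ (2 - p) := Real.rpow_pos_of_pos hab _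
  rw [div_le_iff₀ hD]
  set A1 := a ^ (p - 1) with hA1def
  set B1 := b ^ (p - 1) with hB1def
  set A2 := a ^ (p - 2) with hA2def
  set B2 := b ^ (p - 2) with hB2def
  set D := (a + b) ^ (2 - p) with hDdef
  have hA : A2 * a = A1 := by
    rw [hA2def, hA1def, show p - 1 = (p - 2) + 1 by ring, Real.rpow_add_one ha.ne']
  have hB : B2 * b = B1 := by
    rcases eq_or_lt_of_le hb with h0 | h0
    · simp [hB2def, hB1def, ← h0, Real.zero_rpow (by linarith : p - 2 ≠ 0),
        Real.zero_rpow (by linarith : p - 1 ≠ 0)]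
    · rw [hB2def, hB1def, show p - 1 = (p - 2) + 1 by ring, Real.rpow_add_one h0.ne']
  have hA2pos : 0 < A2 := Real.rpow_pos_of_pos ha _
  have hA1pos : 0 < A1 := Real.rpow_pos_of_pos ha _
  have hB1nn : 0 ≤ B1 := Real.rpow_nonneg hb _
  have hXpos : 0 < a ^ (2 - p) := Real.rpow_pos_of_pos ha _
  have hA2X : A2 * a ^ (2 - p) = 1 := by
    rw [hA2def, ← Real.rpow_add ha, show p - 2 + (2 - p) = 0 by ring, Real.rpow_zero]
  have hA1X : A1 * a ^ (2 - p) = a := by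
    rw [hA1def, ← Real.rpow_add ha, show p - 1 + (2 - p) = 1 by ring, Real.rpow_one]
  have hDge : a ^ (2 - p) ≤ D := by
    exact Real.rpow_le_rpow ha.le (by linarith) (by linarith)
  -- concavity: B1 ≤ (p-1)*b*A2 + (2-p)*A1
  have hgm : (b / a) ^ (p - 1) * (1 : ℝ) ^ (2 - p) ≤ (p - 1) * (b / a) + (2 - p) * 1 :=
    Real.geom_mean_le_arith_mean2_weighted (by linarith) (by linarith)
      (div_nonneg hb ha.le) zero_le_one (by ring)
  have hdiv : (b / a) ^ (p - 1) = B1 / A1 := Real.div_rpow hb ha.le _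
  rw [Real.one_rpow, mul_one, mul_one, hdiv] at hgm
  have hconc : B1 ≤ (p - 1) * b * A2 + (2 - p) * A1 := by
    have h1 : B1 / A1 * A1 ≤ ((p - 1) * (b / a) + (2 - p)) * A1 :=
      mul_le_mul_of_nonneg_right hgm hA1pos.le
    rw [div_mul_cancel₀ _ hA1pos.ne'] at h1
    have h2 : (b / a) * A1 = b * A2 := by
      field_simp
      linear_combination (-b) * hA
    nlinarith [h2]
  -- key1 : (p-1)*A2*(a-b) ≤ A1 - B1
  have hkey1 : (p - 1) * A2 * (a - b) ≤ A1 - B1 := by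
    have hA' : (p - 1) * (A2 * a) = (p - 1) * A1 := by rw [hA]
    linarith
  have hA1B1 : 0 ≤ A1 - B1 := by
    have h0 : 0 ≤ (p - 1) * A2 * (a - b) :=
      mul_nonneg (mul_nonneg (by linarith) hA2pos.le) (by linarith)
    linarith
  -- E1 : (p-1)*(a-b) ≤ (A1 - B1) * D
  have hE1 : (p - 1) * (a - b) ≤ (A1 - B1) * D := by
    have s1 : (p - 1) * A2 * (a - b) * a ^ (2 - p) ≤ (A1 - B1) * a ^ (2 - p) :=
      mul_le_mul_of_nonneg_right hkey1 hXpos.le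
    have s2 : (A1 - B1) * a ^ (2 - p) ≤ (A1 - B1) * D :=
      mul_le_mul_of_nonneg_left hDge hA1B1
    have s3 : (p - 1) * A2 * (a - b) * a ^ (2 - p) = (p - 1) * (a - b) := by
      linear_combination (p - 1) * (a - b) * hA2X
    linarith
  -- E2 : (p-1)/2*(a+b) ≤ (A1 + B1) * D
  have hE2 : (p - 1) / 2 * (a + b) ≤ (A1 + B1) * D := by
    have s1 : A1 * a ^ (2 - p) ≤ A1 * D := mul_le_mul_of_nonneg_left hDge hA1pos.le
    have s2 : (p - 1) / 2 * (a + b) ≤ a := by nlinarith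
    linarith [mul_nonneg hB1nn hD.le, hA1X]
  -- endpoint identities
  have hI1 : A2 * a ^ 2 + B2 * b ^ 2 - (A2 + B2) * (a * b) = (A1 - B1) * (a - b) := by
    linear_combination (a - b) * hA - (a - b) * hB
  have hI2 : A2 * a ^ 2 + B2 * b ^ 2 + (A2 + B2) * (a * b) = (A1 + B1) * (a + b) := by
    linear_combination (a + b) * hA + (a + b) * hB
  have hVp : (p - 1) / 2 * (a - b) ^ 2 ≤ (A2 * a ^ 2 + B2 * b ^ 2 - (A2 + B2) * (a * b)) * D := by
    rw [hI1]
    have h := mul_le_mul_of_nonneg_right hE1 (by linarith : (0:ℝ) ≤ a - b)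
    have h0 : 0 ≤ (p - 1) * ((a - b) * (a - b)) :=
      mul_nonneg (by linarith) (mul_self_nonneg _)
    linarith [h, h0]
  have hVm : (p - 1) / 2 * (a + b) ^ 2 ≤ (A2 * a ^ 2 + B2 * b ^ 2 + (A2 + B2) * (a * b)) * D := by
    rw [hI2]
    have h := mul_le_mul_of_nonneg_right hE2 hab.le
    linarith [h]
  have htl := abs_le.mp ht
  rcases le_or_gt 0 ((A2 + B2) * D - (p - 1)) with hBs | hBs
  · have h := mul_le_mul_of_nonneg_left htl.2 hBs
    linarith
  · have h := mul_le_mul_of_nonpos_left htl.1 hBs.le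
    linarith

lemma key_ineq10 (p : ℝ) (hp1 : 1 < p) (hp2 : p < 2) {n : ℕ}
    (x y : EuclideanSpace ℝ (Fin n)) (hba : ‖y‖ ≤ ‖x‖) (ha : 0 < ‖x‖) :
    ⟪(‖x‖ ^ (p - 2)) • x - (‖y‖ ^ (p - 2)) • y, x - y⟫
      ≥ (p - 1) / 2 * ‖x - y‖ ^ 2 / (‖x‖ + ‖y‖) ^ (2 - p) := by
  have hinner : ⟪(‖x‖ ^ (p - 2)) • x - (‖y‖ ^ (p - 2)) • y, x - y⟫
      = ‖x‖ ^ (p - 2) * ‖x‖ ^ 2 + ‖y‖ ^ (p - 2) * ‖y‖ ^ 2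
        - (‖x‖ ^ (p - 2) + ‖y‖ ^ (p - 2)) * ⟪x, y⟫ := by
    simp only [inner_sub_left, inner_sub_right, real_inner_smul_left,
      real_inner_self_eq_norm_sq, real_inner_comm y x]
    ring
  have hnorm : ‖x - y‖ ^ 2 = ‖x‖ ^ 2 + ‖y‖ ^ 2 - 2 * ⟪x, y⟫ := by
    rw [norm_sub_sq_real]; ring
  rw [hinner, hnorm, ge_iff_le]
  exact scalar_ineq10 p ‖x‖ ‖y‖ ⟪x, y⟫ hp1 hp2 (norm_nonneg y) hba ha
    (abs_real_inner_le_norm x y)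


/-- for `1 < p < 2` there is a constant `c_p > 0`, depending only on `p`,
such that `⟨|x|^{p-2}x - |y|^{p-2}y, x - y⟩ ≥ c_p |x - y|² / (|x| + |y|)^{2-p}` for all
`x, y ∈ ℝ^n` with `(x, y) ≠ (0, 0)`, and all `n`. (Here `‖x‖ ^ (p-2) • x` vanishes for
`x = 0`, since `Real.rpow` assigns `0 ^ (p-2) = 0` for `p < 2`, in accordance with the
convention that `|x|^{p-2} x` is interpreted as `0` when `x = 0`.) -/
theorem statement10 (p : ℝ) (hp1 : 1 < p) (hp2 : p < 2) :
    ∃ c > (0:ℝ), ∀ n : ℕ, 0 < n → ∀ x y : EuclideanSpace ℝ (Fin n), (x, y) ≠ (0, 0) →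
      ⟪(‖x‖ ^ (p - 2)) • x - (‖y‖ ^ (p - 2)) • y, x - y⟫
        ≥ c * ‖x - y‖ ^ 2 / (‖x‖ + ‖y‖) ^ (2 - p) := by

  refine ⟨(p - 1) / 2, by linarith, fun n _ x y hxy => ?_⟩
  rcases le_total ‖y‖ ‖x‖ with h | h
  · have ha : 0 < ‖x‖ := by
      rcases (norm_nonneg x).lt_or_eq with h' | h'
      · exact h'
      · exfalso
        apply hxy
        have hx0 : x = 0 := by simpa using h'.symm
        have hy0 : y = 0 := by
          have : ‖y‖ = 0 := le_antisymm (h'.symm ▸ h) (norm_nonneg y)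
          simpa using this
        simp [hx0, hy0]
    exact key_ineq10 p hp1 hp2 x y h ha
  · have hb : 0 < ‖y‖ := by
      rcases (norm_nonneg y).lt_or_eq with h' | h'
      · exact h'
      · exfalso
        apply hxy
        have hy0 : y = 0 := by simpa using h'.symm
        have hx0 : x = 0 := by
          have : ‖x‖ = 0 := le_antisymm (h'.symm ▸ h) (norm_nonneg x)
          simpa using this
        simp [hx0, hy0]
    have key := key_ineq10 p hp1 hp2 y x h hb
    have e1 : ((‖y‖ ^ (p - 2)) • y - (‖x‖ ^ (p - 2)) • x : EuclideanSpace ℝ (Fin n))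
        = -((‖x‖ ^ (p - 2)) • x - (‖y‖ ^ (p - 2)) • y) := by abel
    have e2 : (y - x : EuclideanSpace ℝ (Fin n)) = -(x - y) := by abel
    rw [e1, e2, inner_neg_neg, norm_neg, add_comm ‖y‖ ‖x‖] at key
    exact key
end

section
/- For every admissible function u ∈ M that is not identically zero, there exists a unique t > 0 such that t^p ‖u‖^p = ∫_0^1 a(r) f(t u(r)) t u(r) r^{N-1} dr (i.e., the ray through u meets the Nehari set 𝒩 in exactly one point). -/
open MeasureTheory Real Set

noncomputable section

open Filter Topology

lemma ratio_tendsto_atTop (p : ℝ) (hp1 : 1 < p) (f : ℝ → ℝ)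
    (hfc : ContinuousOn f (Ici 0)) (hfpos : ∀ t > (0:ℝ), 0 < f t)
    (γ : ℝ) (hγp : γ > p) (hAR : ∀ t > (0:ℝ), f t * t ≥ γ * Fint f t) :
    Tendsto (fun t => f t / t ^ (p - 1)) atTop atTop := by
  have hγ0 : (0:ℝ) < γ := by linarith
  set F := Fint f with hF
  have hint : ∀ t : ℝ, 0 < t → IntervalIntegrable f volume 0 t := by
    intro t ht
    apply ContinuousOn.intervalIntegrable
    apply hfc.mono
    rw [uIcc_of_le ht.le]
    exact Icc_subset_Ici_self
  have hFd : ∀ t : ℝ, 0 < t → HasDerivAt F (f t) t := by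
    intro t ht
    apply intervalIntegral.integral_hasDerivAt_right (hint t ht)
    · exact AEStronglyMeasurable.stronglyMeasurableAtFilter_of_mem
        ((hfc.mono Ioi_subset_Ici_self).aestronglyMeasurable measurableSet_Ioi)
        (Ioi_mem_nhds ht)
    · exact (hfc t (le_of_lt ht)).continuousAt (Ici_mem_nhds ht)
  have hFpos : ∀ t : ℝ, 0 < t → 0 < F t := by
    intro t ht
    exact intervalIntegral.intervalIntegral_pos_of_pos_on (hint t ht)
      (fun x hx => hfpos x hx.1) ht
  -- H = F t / t ^ γ is monotone on [1, ∞)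
  set H := fun t : ℝ => F t / t ^ γ with hH
  have hHd : ∀ t : ℝ, 0 < t →
      HasDerivAt H ((f t * t ^ γ - F t * (γ * t ^ (γ - 1))) / (t ^ γ) ^ 2) t := by
    intro t ht
    exact (hFd t ht).div (Real.hasDerivAt_rpow_const (Or.inl ht.ne')) (Real.rpow_pos_of_pos ht γ).ne'
  have hHmono : MonotoneOn H (Ici 1) := by
    apply monotoneOn_of_deriv_nonneg (convex_Ici 1)
    · intro t ht
      exact ((hHd t (lt_of_lt_of_le one_pos ht)).continuousAt).continuousWithinAt
    · intro t ht
      rw [interior_Ici] at ht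
      exact ((hHd t (lt_trans one_pos ht)).differentiableAt).differentiableWithinAt
    · intro t ht
      rw [interior_Ici] at ht
      have ht0 : (0:ℝ) < t := lt_trans one_pos ht
      rw [(hHd t ht0).deriv]
      apply div_nonneg _ (sq_nonneg _)
      have h1 : t ^ γ = t ^ (γ - 1) * t := by
        rw [← Real.rpow_add_one ht0.ne' (γ - 1)]; ring_nf
      have h2 : f t * t - γ * F t ≥ 0 := by
        have := hAR t ht0; linarith
      have h3 : (0:ℝ) ≤ t ^ (γ - 1) := (Real.rpow_pos_of_pos ht0 _).le
      calc (0:ℝ) ≤ t ^ (γ - 1) * (f t * t - γ * F t) := mul_nonneg h3 h2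
        _ = f t * t ^ γ - F t * (γ * t ^ (γ - 1)) := by rw [h1]; ring
  have hlow : ∀ t : ℝ, 1 ≤ t → F 1 * t ^ γ ≤ F t := by
    intro t ht
    have := hHmono (self_mem_Ici) (mem_Ici.2 ht) ht
    have h1 : H 1 = F 1 := by simp [hH]
    have htγ : (0:ℝ) < t ^ γ := Real.rpow_pos_of_pos (lt_of_lt_of_le one_pos ht) γ
    rw [h1] at this
    calc F 1 * t ^ γ ≤ (F t / t ^ γ) * t ^ γ := by
          apply mul_le_mul_of_nonneg_right this htγ.le
      _ = F t := by field_simp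
  have hF1 : 0 < F 1 := hFpos 1 one_pos
  -- lower bound : γ * F 1 * t ^ (γ - p) ≤ f t / t ^ (p-1) for t ≥ 1
  have hbound : ∀ t : ℝ, 1 ≤ t → γ * F 1 * t ^ (γ - p) ≤ f t / t ^ (p - 1) := by
    intro t ht
    have ht0 : (0:ℝ) < t := lt_of_lt_of_le one_pos ht
    have htp : (0:ℝ) < t ^ (p - 1) := Real.rpow_pos_of_pos ht0 _
    rw [le_div_iff₀ htp]
    have key : γ * F 1 * t ^ (γ - p) * t ^ (p - 1) = γ * F 1 * t ^ γ / t := by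
      have : t ^ (γ - p) * t ^ (p - 1) = t ^ γ / t := by
        rw [← Real.rpow_add ht0, ← Real.rpow_sub_one ht0.ne']
        ring_nf
      rw [mul_assoc, this]; ring
    rw [key]
    have h1 : γ * (F 1 * t ^ γ) ≤ γ * F t :=
      mul_le_mul_of_nonneg_left (hlow t ht) hγ0.le
    have h2 : γ * F t ≤ f t * t := hAR t ht0
    rw [div_le_iff₀ ht0]
    calc γ * F 1 * t ^ γ = γ * (F 1 * t ^ γ) := by ring
      _ ≤ f t * t := le_trans h1 h2
  have hLB : Tendsto (fun t : ℝ => γ * F 1 * t ^ (γ - p)) atTop atTop := by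
    apply Tendsto.const_mul_atTop (mul_pos hγ0 hF1)
    exact tendsto_rpow_atTop (by linarith)
  exact tendsto_atTop_mono' atTop (eventually_atTop.2 ⟨1, hbound⟩) hLB

lemma setIntegral_pos_of_ae_pos {S : Set ℝ} (hS : MeasurableSet S) (hSpos : 0 < volume S)
    {D : ℝ → ℝ} (hD : IntegrableOn D S) (h : ∀ᵐ r ∂(volume.restrict S), 0 < D r) :
    0 < ∫ r in S, D r := by
  have hnn : 0 ≤ᵐ[volume.restrict S] D := h.mono fun r hr => hr.le
  rw [setIntegral_pos_iff_support_of_nonneg_ae hnn hD]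
  have h0 : volume.restrict S {r | r ∉ Function.support D} = 0 := by
    rw [← ae_iff]
    exact h.mono fun r hr => by simp [Function.support, hr.ne']
  rw [Measure.restrict_apply' hS] at h0
  have hsub : S ⊆ (Function.support D ∩ S) ∪ ({r | r ∉ Function.support D} ∩ S) := by
    intro r hr
    by_cases hrD : r ∈ Function.support D
    · exact Or.inl ⟨hrD, hr⟩
    · exact Or.inr ⟨hrD, hr⟩
  calc (0:ENNReal) < volume S := hSpos
    _ ≤ volume ((Function.support D ∩ S) ∪ ({r | r ∉ Function.support D} ∩ S)) :=
        measure_mono hsub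
    _ ≤ volume (Function.support D ∩ S) + volume ({r | r ∉ Function.support D} ∩ S) :=
        measure_union_le _ _
    _ = volume (Function.support D ∩ S) := by rw [h0, add_zero]

lemma exists_pos_before_one (u u' : ℝ → ℝ)
    (hnn : ∀ r ∈ Icc (0:ℝ) 1, 0 ≤ u r)
    (hftc : ∀ r ∈ Icc (0:ℝ) 1, u r = u 0 + ∫ s in (0:ℝ)..r, u' s)
    (hne : ¬ ∀ r ∈ Icc (0:ℝ) 1, u r = 0) :
    ∃ r₀ ∈ Ico (0:ℝ) 1, 0 < u r₀ := by
  by_contra hcon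
  push_neg at hcon
  -- so u r = 0 for all r ∈ [0,1)
  have hz : ∀ r ∈ Ico (0:ℝ) 1, u r = 0 := by
    intro r hr
    exact le_antisymm (hcon r hr) (hnn r ⟨hr.1, hr.2.le⟩)
  have hu0 : u 0 = 0 := hz 0 ⟨le_refl 0, one_pos⟩
  have hu1 : u 1 ≠ 0 := by
    intro h1
    apply hne
    intro r hr
    rcases eq_or_lt_of_le hr.2 with h | h
    · rw [h]; exact h1
    · exact hz r ⟨hr.1, h⟩
  by_cases hI : IntervalIntegrable u' volume 0 1
  · -- primitive is continuous, so u 1 = 0 : contradiction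
    set P := fun x : ℝ => ∫ s in (0:ℝ)..x, u' s with hP
    have hPcont : ContinuousOn P (Icc (0:ℝ) 1) := by
      have h_int : IntegrableOn u' (uIcc (0:ℝ) 1) volume := by
        rw [uIcc_of_le zero_le_one, integrableOn_Icc_iff_integrableOn_Ioc]
        rwa [intervalIntegrable_iff_integrableOn_Ioc_of_le zero_le_one] at hI
      have := intervalIntegral.continuousOn_primitive_interval h_int
      rwa [uIcc_of_le zero_le_one] at this
    have hPz : ∀ r ∈ Ico (0:ℝ) 1, P r = 0 := by
      intro r hr
      have := hftc r ⟨hr.1, hr.2.le⟩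
      rw [hz r hr, hu0, zero_add] at this
      exact this.symm
    have hne2 : (𝓝[Ico (0:ℝ) 1] 1).NeBot := by
      rw [← mem_closure_iff_nhdsWithin_neBot, closure_Ico (by norm_num : (0:ℝ) ≠ 1)]
      exact ⟨zero_le_one, le_refl 1⟩
    have h1 : Tendsto P (𝓝[Ico (0:ℝ) 1] 1) (𝓝 (P 1)) := by
      apply (hPcont 1 ⟨zero_le_one, le_refl 1⟩).tendsto.mono_left
      exact nhdsWithin_mono 1 Ico_subset_Icc_self
    have h2 : Tendsto P (𝓝[Ico (0:ℝ) 1] 1) (𝓝 0) := by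
      apply Tendsto.congr' _ tendsto_const_nhds
      exact eventually_nhdsWithin_of_forall fun r hr => (hPz r hr).symm
    have hP1 : P 1 = 0 := tendsto_nhds_unique h1 h2
    apply hu1
    rw [hftc 1 ⟨zero_le_one, le_refl 1⟩, hu0, zero_add]
    exact hP1
  · apply hu1
    rw [hftc 1 ⟨zero_le_one, le_refl 1⟩, hu0, zero_add,
      intervalIntegral.integral_undef hI]

/-- for every admissible `u` not identically zero, the ray through `u`
meets the Nehari set in exactly one point. -/
theorem statement14 (N : ℕ) (hN : 3 ≤ N) (p : ℝ) (hp1 : 1 < p)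
    (a f f' : ℝ → ℝ) (hA : CondA a) (hF' : CondF' p f f') (hF'' : CondF'' p f)
    (u u' : ℝ → ℝ) (hu : Admissible N p u u')
    (hne : ¬ ∀ r ∈ Icc (0:ℝ) 1, u r = 0) :
    ∃! t : ℝ, 0 < t ∧
      t ^ p * (Mnorm N p u u') ^ p
        = ∫ r in Ioo (0:ℝ) 1, a r * f (t * u r) * (t * u r) * r ^ (N - 1) := by
  obtain ⟨hunn, humono, hu'meas, huftc, huint⟩ := hu
  obtain ⟨hameas, -, -, hapos, haint⟩ := hA
  obtain ⟨hfd, hf'c, hflim, -, γ, hγp, hAR⟩ := hF'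
  have hp0 : (0:ℝ) < p := lt_trans one_pos hp1
  have hpm1 : (0:ℝ) < p - 1 := by linarith
  have hfc : ContinuousOn f (Ici 0) := fun t ht => (hfd t ht).continuousWithinAt
  -- the function g(s) = f(s)/s^(p-1), extended measurably
  set g : ℝ → ℝ := fun s => f (max s 0) / s ^ (p - 1) with hgdef
  have hg_eq : ∀ s : ℝ, 0 ≤ s → g s = f s / s ^ (p - 1) := by
    intro s hs; simp [hgdef, max_eq_left hs]
  have hg0 : g 0 = 0 := by
    simp [hgdef, Real.zero_rpow (by linarith : p - 1 ≠ 0)]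
  have hg_lim : Tendsto g (𝓝[>] (0:ℝ)) (𝓝 0) := by
    apply hflim.congr'
    filter_upwards [eventually_mem_nhdsWithin] with s hs
    exact (hg_eq s (le_of_lt hs)).symm
  have hg_smono : StrictMonoOn g (Ioi 0) := by
    intro x hx y hy hxy
    have := hF'' hx hy hxy
    simpa only [hg_eq x (le_of_lt hx), hg_eq y (le_of_lt hy)] using this
  have hg_nonneg : ∀ s : ℝ, 0 ≤ s → 0 ≤ g s := by
    intro s hs
    rcases eq_or_lt_of_le hs with h | h
    · rw [← h, hg0]
    · apply le_of_tendsto hg_lim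
      filter_upwards [Ioo_mem_nhdsGT_of_mem ⟨le_refl (0:ℝ), h⟩] with x hx
      exact (hg_smono hx.1 h hx.2).le
  have hg_pos : ∀ s : ℝ, 0 < s → 0 < g s := by
    intro s hs
    exact lt_of_le_of_lt (hg_nonneg (s/2) (by linarith))
      (hg_smono (by simpa using half_pos hs) hs (by linarith))
  have hg_mono : ∀ s t : ℝ, 0 ≤ s → s ≤ t → g s ≤ g t := by
    intro s t hs hst
    rcases eq_or_lt_of_le hst with h | h
    · rw [h]
    · rcases eq_or_lt_of_le hs with h0 | h0
      · rw [← h0, hg0]; exact hg_nonneg t (by linarith)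
      · exact (hg_smono h0 (lt_trans h0 h) h).le
  have hf_pos : ∀ t : ℝ, 0 < t → 0 < f t := by
    intro t ht
    have h1 := hg_pos t ht
    rw [hg_eq t ht.le] at h1
    have h2 : (0:ℝ) < t ^ (p - 1) := Real.rpow_pos_of_pos ht _
    have : f t = f t / t ^ (p - 1) * t ^ (p - 1) := by field_simp
    rw [this]; exact mul_pos h1 h2
  have hg_top : Tendsto g atTop atTop := by
    apply (ratio_tendsto_atTop p hp1 f hfc hf_pos γ hγp hAR).congr'
    filter_upwards [eventually_gt_atTop (0:ℝ)] with s hs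
    exact (hg_eq s hs.le).symm
  have hg_meas : Measurable g := by
    have hmax : Continuous (fun s : ℝ => max s 0) := continuous_id.max continuous_const
    have hfm : Continuous (fun s : ℝ => f (max s 0)) :=
      hfc.comp_continuous hmax (fun x => mem_Ici.2 (le_max_right _ _))
    exact hfm.measurable.div ((Real.continuous_rpow_const hpm1.le).measurable)
  have hg_contOn : ContinuousOn g (Ioi 0) := by
    apply ContinuousOn.div
    · exact (hfc.comp_continuous (continuous_id.max continuous_const)
        (fun x => mem_Ici.2 (le_max_right _ _))).continuousOn
    · exact (Real.continuous_rpow_const hpm1.le).continuousOn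
    · intro s hs; exact (Real.rpow_pos_of_pos hs _).ne'
  -- basic facts about u
  have hu1nn : 0 ≤ u 1 := hunn 1 ⟨zero_le_one, le_refl 1⟩
  have huu1 : ∀ r ∈ Ioo (0:ℝ) 1, u r ≤ u 1 := by
    intro r hr
    exact humono ⟨hr.1.le, hr.2.le⟩ ⟨zero_le_one, le_refl 1⟩ hr.2.le
  have hu_aem : AEMeasurable u (volume.restrict (Ioo (0:ℝ) 1)) :=
    aemeasurable_restrict_of_monotoneOn measurableSet_Ioo (humono.mono Ioo_subset_Icc_self)
  obtain ⟨r₀, hr₀, hur₀⟩ := exists_pos_before_one u u' hunn huftc hne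
  set ε : ℝ := u r₀ with hεdef
  have hε : 0 < ε := hur₀
  set c : ℝ := (r₀ + 1) / 2 with hcdef
  have hc0 : 0 < c := by simp only [hcdef]; linarith [hr₀.1]
  have hc1 : c < 1 := by simp only [hcdef]; linarith [hr₀.2]
  have hr₀c : r₀ < c := by simp only [hcdef]; linarith [hr₀.2]
  set S : Set ℝ := Ioo c 1 with hSdef
  have hS_sub : S ⊆ Ioo (0:ℝ) 1 := fun r hr => ⟨lt_trans hc0 hr.1, hr.2⟩
  have hSvol : 0 < volume S := by
    rw [hSdef, Real.volume_Ioo]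
    exact ENNReal.ofReal_pos.2 (by linarith)
  have hSε : ∀ r ∈ S, ε ≤ u r := by
    intro r hr
    exact humono ⟨hr₀.1, hr₀.2.le⟩ ⟨(lt_trans hc0 hr.1).le, hr.2.le⟩
      (le_of_lt (lt_trans hr₀c hr.1))
  have hu1pos : 0 < u 1 :=
    lt_of_lt_of_le hε (humono ⟨hr₀.1, hr₀.2.le⟩ ⟨zero_le_one, le_refl 1⟩ hr₀.2.le)
  -- X = ‖u‖^p
  set X : ℝ := ∫ r in Ioo (0:ℝ) 1, (|u' r| ^ p + u r ^ p) * r ^ (N - 1) with hXdef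
  have hXint_nn : 0 ≤ᵐ[volume.restrict (Ioo (0:ℝ) 1)]
      fun r => (|u' r| ^ p + u r ^ p) * r ^ (N - 1) := by
    filter_upwards [ae_restrict_mem measurableSet_Ioo] with r hr
    have h1 := hunn r (Ioo_subset_Icc_self hr)
    exact mul_nonneg (add_nonneg (Real.rpow_nonneg (abs_nonneg _) _)
      (Real.rpow_nonneg h1 _)) (pow_nonneg hr.1.le _)
  have hXnn : 0 ≤ X := integral_nonneg_of_ae hXint_nn
  have hXpos : 0 < X := by
    have h2 : 0 < ∫ r in S, (|u' r| ^ p + u r ^ p) * r ^ (N - 1) := by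
      apply setIntegral_pos_of_ae_pos measurableSet_Ioo hSvol (huint.mono_set hS_sub)
      rw [ae_restrict_iff' measurableSet_Ioo]
      apply ae_of_all
      intro r hr
      have h3 : 0 < u r := lt_of_lt_of_le hε (hSε r hr)
      have h4 : 0 < r := lt_trans hc0 hr.1
      have h5 : 0 < u r ^ p := Real.rpow_pos_of_pos h3 p
      have h6 : 0 ≤ |u' r| ^ p := Real.rpow_nonneg (abs_nonneg _) p
      have h7 : 0 < r ^ (N - 1) := pow_pos h4 _
      positivity
    have h1 : ∫ r in S, (|u' r| ^ p + u r ^ p) * r ^ (N - 1) ≤ X :=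
      setIntegral_mono_set huint hXint_nn hS_sub.eventuallyLE
    linarith
  have hX_eq : (Mnorm N p u u') ^ p = X := by
    rw [Mnorm, ← hXdef, ← Real.rpow_mul hXnn, one_div_mul_cancel hp0.ne', Real.rpow_one]
  -- the family Φ and ψ
  set Φ : ℝ → ℝ → ℝ := fun t r => a r * g (t * u r) * u r ^ p * r ^ (N - 1) with hΦdef
  set ψ : ℝ → ℝ := fun t => ∫ r in Ioo (0:ℝ) 1, Φ t r with hψdef
  have hΦmeas : ∀ t : ℝ, AEStronglyMeasurable (Φ t) (volume.restrict (Ioo (0:ℝ) 1)) := by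
    intro t
    have h1 : AEMeasurable (fun r => g (t * u r)) (volume.restrict (Ioo (0:ℝ) 1)) :=
      hg_meas.comp_aemeasurable (hu_aem.const_mul t)
    have h2 : AEMeasurable (fun r => u r ^ p) (volume.restrict (Ioo (0:ℝ) 1)) :=
      ((Real.continuous_rpow_const hp0.le).measurable).comp_aemeasurable hu_aem
    exact (((hameas.aemeasurable.mul h1).mul h2).mul
      ((measurable_id.pow_const (N - 1)).aemeasurable)).aestronglyMeasurable
  have hbnd : ∀ t T : ℝ, 0 ≤ t → t ≤ T →
      ∀ᵐ r ∂(volume.restrict (Ioo (0:ℝ) 1)),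
        ‖Φ t r‖ ≤ g (T * u 1) * u 1 ^ p * a r := by
    intro t T ht htT
    filter_upwards [hapos, ae_restrict_mem measurableSet_Ioo] with r har hr
    have h0u : 0 ≤ u r := hunn r (Ioo_subset_Icc_self hr)
    have hle : u r ≤ u 1 := huu1 r hr
    have h1 : 0 ≤ g (t * u r) := hg_nonneg _ (mul_nonneg ht h0u)
    have h2 : g (t * u r) ≤ g (T * u 1) :=
      hg_mono _ _ (mul_nonneg ht h0u) (mul_le_mul htT hle h0u (le_trans ht htT))
    have h3 : u r ^ p ≤ u 1 ^ p := Real.rpow_le_rpow h0u hle hp0.le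
    have h4 : r ^ (N - 1) ≤ 1 := pow_le_one₀ hr.1.le hr.2.le
    have h5 : (0:ℝ) ≤ u r ^ p := Real.rpow_nonneg h0u p
    have h6 : (0:ℝ) ≤ r ^ (N - 1) := pow_nonneg hr.1.le _
    have h7 : (0:ℝ) ≤ u 1 ^ p := Real.rpow_nonneg hu1nn p
    have h8 : 0 ≤ g (T * u 1) := le_trans h1 h2
    have hnn : 0 ≤ Φ t r := by
      simp only [hΦdef]
      have := har.le; positivity
    rw [Real.norm_eq_abs, abs_of_nonneg hnn]
    simp only [hΦdef]
    calc a r * g (t * u r) * u r ^ p * r ^ (N - 1)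
        ≤ a r * g (T * u 1) * u 1 ^ p * 1 := by
          apply mul_le_mul _ h4 h6 _
          · apply mul_le_mul _ h3 h5 _
            · exact mul_le_mul_of_nonneg_left h2 har.le
            · exact mul_nonneg har.le h8
          · exact mul_nonneg (mul_nonneg har.le h8) h7
      _ = g (T * u 1) * u 1 ^ p * a r := by ring
  have hΦint : ∀ t : ℝ, 0 ≤ t → IntegrableOn (Φ t) (Ioo (0:ℝ) 1) := by
    intro t ht
    exact Integrable.mono' (haint.const_mul (g (t * u 1) * u 1 ^ p)) (hΦmeas t)
      (by simpa [mul_assoc] using hbnd t t ht le_rfl)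
  have hΦnn : ∀ t : ℝ, 0 ≤ t → 0 ≤ᵐ[volume.restrict (Ioo (0:ℝ) 1)] Φ t := by
    intro t ht
    filter_upwards [hapos, ae_restrict_mem measurableSet_Ioo] with r har hr
    have h0u : 0 ≤ u r := hunn r (Ioo_subset_Icc_self hr)
    have h1 : 0 ≤ g (t * u r) := hg_nonneg _ (mul_nonneg ht h0u)
    simp only [hΦdef]
    exact mul_nonneg (mul_nonneg (mul_nonneg har.le h1) (Real.rpow_nonneg h0u _))
      (pow_nonneg hr.1.le _)
  -- key pointwise identity
  have hterm : ∀ t : ℝ, 0 < t → ∀ r ∈ Ioo (0:ℝ) 1,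
      a r * f (t * u r) * (t * u r) * r ^ (N - 1) = t ^ p * Φ t r := by
    intro t ht r hr
    have h0u : 0 ≤ u r := hunn r (Ioo_subset_Icc_self hr)
    rcases eq_or_lt_of_le h0u with h | h
    · simp only [hΦdef, ← h, mul_zero, Real.zero_rpow hp0.ne']
      ring
    · set s : ℝ := t * u r with hsdef
      have hs : 0 < s := mul_pos ht h
      have hsp : s ^ (p - 1) ≠ 0 := (Real.rpow_pos_of_pos hs _).ne'
      have e1 : g s = f s / s ^ (p - 1) := hg_eq s hs.le
      have e2 : t ^ p * u r ^ p = s ^ (p - 1) * s := by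
        rw [hsdef, ← Real.mul_rpow ht.le h0u]
        · rw [← Real.rpow_add_one (mul_pos ht h).ne' (p - 1)]
          norm_num
      simp only [hΦdef]
      rw [← hsdef, e1]
      have e3 : t ^ p * (a r * (f s / s ^ (p - 1)) * u r ^ p * r ^ (N - 1))
          = a r * (f s / s ^ (p - 1)) * (t ^ p * u r ^ p) * r ^ (N - 1) := by ring
      rw [e3, e2]
      field_simp
  have hint_eq : ∀ t : ℝ, 0 < t →
      (∫ r in Ioo (0:ℝ) 1, a r * f (t * u r) * (t * u r) * r ^ (N - 1)) = t ^ p * ψ t := by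
    intro t ht
    rw [hψdef, ← integral_const_mul]
    exact setIntegral_congr_fun measurableSet_Ioo (fun r hr => hterm t ht r hr)
  -- strict monotonicity of ψ
  have hψmono : ∀ s t : ℝ, 0 < s → s < t → ψ s < ψ t := by
    intro s t hs hst
    have hti : IntegrableOn (Φ t) (Ioo (0:ℝ) 1) := hΦint t (le_of_lt (hs.trans hst))
    have hsi := hΦint s hs.le
    have hsub : ψ t - ψ s = ∫ r in Ioo (0:ℝ) 1, (Φ t r - Φ s r) := (integral_sub hti hsi).symm
    have hDnn : 0 ≤ᵐ[volume.restrict (Ioo (0:ℝ) 1)] fun r => Φ t r - Φ s r := by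
      filter_upwards [hapos, ae_restrict_mem measurableSet_Ioo] with r har hr
      have h0u := hunn r (Ioo_subset_Icc_self hr)
      have h2 : g (s * u r) ≤ g (t * u r) :=
        hg_mono _ _ (mul_nonneg hs.le h0u) (mul_le_mul_of_nonneg_right hst.le h0u)
      have key : Φ t r - Φ s r
          = a r * ((g (t * u r) - g (s * u r)) * (u r ^ p * r ^ (N - 1))) := by
        simp only [hΦdef]; ring
      simp only [Pi.zero_apply]
      rw [key]
      exact mul_nonneg har.le (mul_nonneg (sub_nonneg.2 h2)
        (mul_nonneg (Real.rpow_nonneg h0u _) (pow_nonneg hr.1.le _)))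
    have hpos : 0 < ∫ r in S, (Φ t r - Φ s r) := by
      apply setIntegral_pos_of_ae_pos measurableSet_Ioo hSvol
        ((hti.mono_set hS_sub).sub (hsi.mono_set hS_sub))
      filter_upwards [ae_restrict_of_ae_restrict_of_subset hS_sub hapos,
        ae_restrict_mem measurableSet_Ioo] with r har hr
      have hru : ε ≤ u r := hSε r hr
      have h0u : 0 < u r := lt_of_lt_of_le hε hru
      have hglt : g (s * u r) < g (t * u r) :=
        hg_smono (mem_Ioi.2 (mul_pos hs h0u)) (mem_Ioi.2 (mul_pos (hs.trans hst) h0u))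
          (mul_lt_mul_of_pos_right hst h0u)
      simp only [Pi.sub_apply]
      have key : Φ t r - Φ s r
          = a r * ((g (t * u r) - g (s * u r)) * (u r ^ p * r ^ (N - 1))) := by
        simp only [hΦdef]; ring
      rw [key]
      exact mul_pos har (mul_pos (sub_pos.2 hglt)
        (mul_pos (Real.rpow_pos_of_pos h0u _) (pow_pos (lt_trans hc0 hr.1) _)))
    have hmono2 : ∫ r in S, (Φ t r - Φ s r) ≤ ∫ r in Ioo (0:ℝ) 1, (Φ t r - Φ s r) :=
      setIntegral_mono_set (hti.sub hsi) hDnn hS_sub.eventuallyLE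
    linarith
  -- upper bound for small t
  have hIa_nn : 0 ≤ ∫ r in Ioo (0:ℝ) 1, a r :=
    integral_nonneg_of_ae (hapos.mono fun r h => h.le)
  set C₁ : ℝ := u 1 ^ p * ∫ r in Ioo (0:ℝ) 1, a r with hC₁
  have hψ_le : ∀ t : ℝ, 0 < t → ψ t ≤ g (t * u 1) * C₁ := by
    intro t ht
    have hstep : ψ t ≤ ∫ r in Ioo (0:ℝ) 1, g (t * u 1) * u 1 ^ p * a r := by
      apply setIntegral_mono_ae_restrict (hΦint t ht.le) (haint.const_mul _)
      filter_upwards [hbnd t t ht.le le_rfl] with r hbr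
      exact le_trans (le_abs_self _) hbr
    calc ψ t ≤ ∫ r in Ioo (0:ℝ) 1, g (t * u 1) * u 1 ^ p * a r := hstep
      _ = g (t * u 1) * u 1 ^ p * ∫ r in Ioo (0:ℝ) 1, a r := integral_const_mul _ _
      _ = g (t * u 1) * C₁ := by rw [hC₁]; ring
  have hmul1 : Tendsto (fun t : ℝ => t * u 1) (𝓝[>] 0) (𝓝[>] 0) := by
    apply tendsto_nhdsWithin_of_tendsto_nhds_of_eventually_within
    · have h := (continuous_id.mul (continuous_const : Continuous fun _ : ℝ => u 1)).tendsto (0:ℝ)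
      have h : Tendsto (fun t : ℝ => t * u 1) (𝓝 0) (𝓝 0) := by simp at h; exact h
      exact h.mono_left nhdsWithin_le_nhds
    · filter_upwards [eventually_mem_nhdsWithin] with t ht
      exact mul_pos ht hu1pos
  have hlim1 : Tendsto (fun t => g (t * u 1) * C₁) (𝓝[>] (0:ℝ)) (𝓝 0) := by
    have h := (hg_lim.comp hmul1).mul_const C₁
    simpa using h
  obtain ⟨t₁, ht₁lt, ht₁pos⟩ :=
    ((hlim1.eventually_lt_const hXpos).and eventually_mem_nhdsWithin).exists
  rw [mem_Ioi] at ht₁pos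
  -- lower bound for large t
  have hA₀pos : 0 < ∫ r in S, a r :=
    setIntegral_pos_of_ae_pos measurableSet_Ioo hSvol (haint.mono_set hS_sub)
      (ae_restrict_of_ae_restrict_of_subset hS_sub hapos)
  set C₂ : ℝ := ε ^ p * c ^ (N - 1) * ∫ r in S, a r with hC₂
  have hC₂pos : 0 < C₂ :=
    mul_pos (mul_pos (Real.rpow_pos_of_pos hε _) (pow_pos hc0 _)) hA₀pos
  have hψ_ge : ∀ t : ℝ, 0 < t → g (t * ε) * C₂ ≤ ψ t := by
    intro t ht
    have h1 : ∫ r in S, (g (t * ε) * ε ^ p * c ^ (N - 1)) * a r ≤ ∫ r in S, Φ t r := by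
      apply setIntegral_mono_ae_restrict ((haint.mono_set hS_sub).const_mul _)
        ((hΦint t ht.le).mono_set hS_sub)
      filter_upwards [ae_restrict_of_ae_restrict_of_subset hS_sub hapos,
        ae_restrict_mem measurableSet_Ioo] with r har hr
      have hru : ε ≤ u r := hSε r hr
      have h0u : 0 < u r := lt_of_lt_of_le hε hru
      have hg1 : g (t * ε) ≤ g (t * u r) :=
        hg_mono _ _ (mul_nonneg ht.le hε.le) (mul_le_mul_of_nonneg_left hru ht.le)
      have hg0' : 0 ≤ g (t * ε) := hg_nonneg _ (mul_nonneg ht.le hε.le)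
      have hup : ε ^ p ≤ u r ^ p := Real.rpow_le_rpow hε.le hru hp0.le
      have hw : c ^ (N - 1) ≤ r ^ (N - 1) := pow_le_pow_left₀ hc0.le hr.1.le _
      simp only [hΦdef]
      have hag : 0 ≤ a r * g (t * u r) := mul_nonneg har.le (hg0'.trans hg1)
      calc g (t * ε) * ε ^ p * c ^ (N - 1) * a r
          = a r * g (t * ε) * ε ^ p * c ^ (N - 1) := by ring
        _ ≤ a r * g (t * u r) * u r ^ p * r ^ (N - 1) := by
            apply mul_le_mul _ hw (pow_nonneg hc0.le _)
              (mul_nonneg hag (Real.rpow_nonneg h0u.le _))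
            apply mul_le_mul _ hup (Real.rpow_nonneg hε.le _) hag
            exact mul_le_mul_of_nonneg_left hg1 har.le
    have h2 : ∫ r in S, Φ t r ≤ ψ t :=
      setIntegral_mono_set (hΦint t ht.le) (hΦnn t ht.le) hS_sub.eventuallyLE
    have h3 : ∫ r in S, (g (t * ε) * ε ^ p * c ^ (N - 1)) * a r = g (t * ε) * C₂ := by
      rw [integral_const_mul, hC₂]; ring
    linarith
  have htop : Tendsto (fun t : ℝ => g (t * ε) * C₂) atTop atTop := by
    apply Tendsto.atTop_mul_const hC₂pos
    exact hg_top.comp (tendsto_id.atTop_mul_const hε)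
  obtain ⟨t₂, h2X, h2t⟩ := ((htop.eventually_gt_atTop X).and (eventually_gt_atTop t₁)).exists
  have ht₂pos : 0 < t₂ := lt_trans ht₁pos h2t
  -- continuity of ψ on [t₁, t₂]
  have hψcont : ContinuousOn ψ (Icc t₁ t₂) := by
    rw [hψdef]
    apply continuousOn_of_dominated (bound := fun r => g (t₂ * u 1) * u 1 ^ p * a r)
    · intro t _; exact hΦmeas t
    · intro t ht; exact hbnd t t₂ (le_trans ht₁pos.le ht.1) ht.2
    · exact haint.const_mul _
    · filter_upwards [ae_restrict_mem measurableSet_Ioo] with r hr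
      have h0u := hunn r (Ioo_subset_Icc_self hr)
      rcases eq_or_lt_of_le h0u with h | h
      · simp only [hΦdef, ← h, mul_zero]
        exact continuousOn_const
      · simp only [hΦdef]
        apply ContinuousOn.mul (ContinuousOn.mul (ContinuousOn.mul continuousOn_const ?_)
          continuousOn_const) continuousOn_const
        apply hg_contOn.comp ((continuous_id.mul continuous_const).continuousOn)
        intro x hx
        exact mem_Ioi.2 (mul_pos (lt_of_lt_of_le ht₁pos hx.1) h)
  -- intermediate value theorem
  have hψt₁ : ψ t₁ < X := lt_of_le_of_lt (hψ_le t₁ ht₁pos) ht₁lt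
  have hψt₂ : X < ψ t₂ := lt_of_lt_of_le h2X (hψ_ge t₂ ht₂pos)
  obtain ⟨t₀, ht₀mem, ht₀eq⟩ :=
    intermediate_value_Icc (le_of_lt h2t) hψcont ⟨hψt₁.le, hψt₂.le⟩
  have ht₀pos : 0 < t₀ := lt_of_lt_of_le ht₁pos ht₀mem.1
  refine ⟨t₀, ⟨ht₀pos, ?_⟩, ?_⟩
  · rw [hX_eq, hint_eq t₀ ht₀pos, ht₀eq]
  · rintro y ⟨hy, hyeq⟩
    rw [hX_eq, hint_eq y hy] at hyeq
    have hyX : ψ y = X := (mul_left_cancel₀ (Real.rpow_pos_of_pos hy p).ne' hyeq).symm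
    by_contra hne'
    rcases lt_or_gt_of_ne hne' with hlt | hgt
    · have h := hψmono y t₀ hy hlt
      rw [hyX, ht₀eq] at h
      exact lt_irrefl X h
    · have h := hψmono t₀ y ht₀pos hgt
      rw [hyX, ht₀eq] at h
      exact lt_irrefl X h


end
end
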